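/- For q ≥ 2 and λ ∈ (-2√q, 2√q), with μ^- = (λ - i√(4q-λ²))/(2q) and G^λ(v,w) = (μ^-)^{d(v,w)}/((q+1)μ^- - λ), one has for each d ≥ 0: Im G^λ at distance d divided by Im G^λ at distance 0 equals the spherical function Φ_λ(d) defined by the recursion Φ_λ(d)=(1/q)(λΦ_λ(d-1)-Φ_λ(d-2)), Φ_λ(0)=1, Φ_λ(1)=λ/(q+1). -/

import Mathlib

/-- For `q ≥ 2`, `λ ∈ (-2√q, 2√q)`, `μ⁻ = (λ - i√(4q-λ²))/(2q)` and
`G^λ(d) = (μ⁻)^d/((q+1)μ⁻ - λ)`: for each `d`, `Im G^λ(d) / Im G^λ(0)` equals the spherical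
function `Φ_λ(d)`, i.e. `Im((μ⁻)^d/((q+1)μ⁻-λ)) = Φ_λ(d) · Im(1/((q+1)μ⁻-λ))`. -/
theorem green_imaginary_part_spherical
    (q : ℕ) (hq : 2 ≤ q) (lam : ℝ) (hlam : |lam| < 2 * Real.sqrt q)
    (μ : ℂ)
    (hμ : μ = ((lam : ℂ) - Complex.I * (Real.sqrt (4 * q - lam ^ 2) : ℝ)) / (2 * q))
    (Φ : ℕ → ℝ) (h0 : Φ 0 = 1) (h1 : Φ 1 = lam / (q + 1))
    (hrec : ∀ d : ℕ, 2 ≤ d → Φ d = (1 / q) * (lam * Φ (d - 1) - Φ (d - 2))) :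
    ∀ d : ℕ, (μ ^ d / (((q : ℂ) + 1) * μ - (lam : ℂ))).im
      = Φ d * (1 / (((q : ℂ) + 1) * μ - (lam : ℂ))).im := by
  have hqR : (0:ℝ) < q := by positivity
  have hqR' : (q:ℝ) ≠ 0 := ne_of_gt hqR
  have hqC : (q:ℂ) ≠ 0 := by exact_mod_cast hqR'
  set s : ℝ := Real.sqrt (4 * q - lam ^ 2) with hs
  have hlam2 : lam ^ 2 < 4 * q := by
    have h := abs_lt.mp hlam
    nlinarith [Real.sq_sqrt (le_of_lt hqR), Real.sqrt_nonneg (q:ℝ), sq_abs lam]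
  have hspos : 0 < s := Real.sqrt_pos.mpr (by linarith)
  have hs2 : s ^ 2 = 4 * q - lam ^ 2 := Real.sq_sqrt (by linarith)
  have hsC : ((s:ℂ)) ^ 2 = 4 * (q:ℂ) - (lam:ℂ) ^ 2 := by
    rw [← Complex.ofReal_pow, hs2]; push_cast; ring
  have h2q : 2 * (q:ℂ) * μ = (lam:ℂ) - Complex.I * s := by
    rw [hμ]; field_simp
  -- μ satisfies q μ² - λ μ + 1 = 0
  have hquad : (q:ℂ) * μ ^ 2 = (lam:ℂ) * μ - 1 := by
    have h4 : (4:ℂ) * q * ((q:ℂ) * μ ^ 2) = 4 * q * ((lam:ℂ) * μ - 1) := by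
      linear_combination (2*(q:ℂ)*μ - (lam:ℂ) - Complex.I*s) * h2q
        + (s:ℂ)^2 * Complex.I_sq - hsC
    exact mul_left_cancel₀ (by simpa using hqC) h4
  set D : ℂ := ((q : ℂ) + 1) * μ - (lam : ℂ) with hD
  have hμim : μ.im = -s / (2 * q) := by
    have := congrArg Complex.im h2q
    simp [Complex.mul_im] at this
    field_simp at this ⊢
    linarith
  have hDne : D ≠ 0 := by
    intro h
    have : D.im = 0 := by rw [h]; simp
    rw [hD] at this
    simp [Complex.sub_im, Complex.mul_im, hμim] at this
    have hq1 : (0:ℝ) < (q:ℝ) + 1 := by linarith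
    have : ((q:ℝ) + 1) * (-s / (2*q)) = 0 := by
      simpa [Complex.add_im, Complex.add_re] using this
    have hne : ((q:ℝ)+1) * (-s / (2*q)) < 0 := by
      apply mul_neg_of_pos_of_neg hq1
      apply div_neg_of_neg_of_pos (by linarith) (by positivity)
    linarith
  have hq1C : (q:ℂ) + 1 ≠ 0 := by
    intro h
    have := congrArg Complex.re h
    simp at this
    linarith
  intro d
  induction d using Nat.strong_induction_on with
  | _ d ih =>
    match d with
    | 0 => simp [h0]
    | 1 =>
      have key : μ ^ 1 / D = ((1/((q:ℝ)+1) : ℝ) : ℂ) + ((lam/((q:ℝ)+1) : ℝ) : ℂ) * (1 / D) := by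
        push_cast
        field_simp [hDne, hq1C]
        rw [hD]; ring
      rw [key, Complex.add_im, Complex.mul_im]
      simp only [Complex.ofReal_re, Complex.ofReal_im, zero_mul, add_zero, zero_add]
      rw [h1]
    | (n+2) =>
      have hrec' := hrec (n+2) (by omega)
      simp only [show n+2-1 = n+1 from rfl, show n+2-2 = n from rfl] at hrec'
      have key : μ ^ (n+2) / D
          = ((lam/(q:ℝ) : ℝ) : ℂ) * (μ ^ (n+1) / D) - ((1/(q:ℝ) : ℝ) : ℂ) * (μ ^ n / D) := by
        push_cast
        field_simp [hDne, hqC]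
        linear_combination μ ^ n * hquad
      rw [key, Complex.sub_im, Complex.mul_im, Complex.mul_im]
      simp only [Complex.ofReal_re, Complex.ofReal_im, zero_mul, add_zero]
      rw [ih (n+1) (by omega), ih n (by omega), hrec']
      ring
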